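/- (Extended Interpolation Theorem) Let X be a conjunction of a finite set of clauses and Y a disjunction of a finite set of conjunctions of literals, with X → Y valid. Then there exists a formula I such that X → I and I → Y are both valid, and moreover, if there exists a literal l such that l and l* occur in distinct clauses of X ∪ Y* (the set of clauses of X together with complements of the disjuncts of Y), then every propositional variable of I occurs in both X and Y. -/

import Mathlib

/-- Propositional formulas over variables indexed by naturals. -/
inductive PropForm where
  | var : Nat → PropForm
  | fls : PropForm
  | tru : PropForm
  | neg : PropForm → PropForm
  | conj : PropForm → PropForm → PropForm
  | disj : PropForm → PropForm → PropForm
deriving DecidableEq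

/-- Classical Boolean evaluation of a formula under a valuation. -/
def PropForm.eval (v : Nat → Bool) : PropForm → Bool
  | .var n => v n
  | .fls => false
  | .tru => true
  | .neg A => !(A.eval v)
  | .conj A B => A.eval v && B.eval v
  | .disj A B => A.eval v || B.eval v

/-- The propositional variables occurring in a formula. -/
def PropForm.vars : PropForm → Finset Nat
  | .var n => {n}
  | .fls => ∅
  | .tru => ∅
  | .neg A => A.vars
  | .conj A B => A.vars ∪ B.vars
  | .disj A B => A.vars ∪ B.vars

/-- A formula is valid iff true under every valuation. -/
def PropForm.Valid (A : PropForm) : Prop := ∀ v : Nat → Bool, A.eval v = true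

/-- Literals: a variable or its negation. -/
inductive Lit where
  | pos : Nat → Lit
  | neg : Nat → Lit
deriving DecidableEq

/-- The complement of a literal. -/
def Lit.compl : Lit → Lit
  | .pos n => .neg n
  | .neg n => .pos n

/-- The variable of a literal. -/
def Lit.var : Lit → Nat
  | .pos n => n
  | .neg n => n

/-- Evaluation of a literal. -/
def Lit.eval (v : Nat → Bool) : Lit → Bool
  | .pos n => v n
  | .neg n => !(v n)

/-- A literal as a formula. -/
def Lit.toForm : Lit → PropForm
  | .pos n => .var n
  | .neg n => .neg (.var n)

/-- A clause (finite set of literals read disjunctively) is satisfied by `v`. -/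
def clauseSat (v : Nat → Bool) (C : Finset Lit) : Prop := ∃ l ∈ C, l.eval v = true

/-- A conjunction of literals (finite set read conjunctively) is satisfied by `v`. -/
def cubeSat (v : Nat → Bool) (C : Finset Lit) : Prop := ∀ l ∈ C, l.eval v = true


def bigDisj : List PropForm → PropForm
  | [] => .fls
  | A :: l => .disj A (bigDisj l)

theorem bigDisj_eval (v : Nat → Bool) : ∀ l : List PropForm,
    (bigDisj l).eval v = true ↔ ∃ A ∈ l, A.eval v = true
  | [] => by simp [bigDisj, PropForm.eval]
  | A :: l => by simp [bigDisj, PropForm.eval, bigDisj_eval v l]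

theorem bigDisj_vars : ∀ (l : List PropForm), ∀ n ∈ (bigDisj l).vars, ∃ A ∈ l, n ∈ A.vars
  | [] => by simp [bigDisj, PropForm.vars]
  | A :: l => by
      intro n hn
      simp only [bigDisj, PropForm.vars, Finset.mem_union] at hn
      rcases hn with h | h
      · exact ⟨A, by simp, h⟩
      · obtain ⟨B, hB, hB2⟩ := bigDisj_vars l n h
        exact ⟨B, by simp [hB], hB2⟩

def cubeForm : List Nat → List Bool → PropForm
  | n :: L, b :: bs => .conj (if b then .var n else .neg (.var n)) (cubeForm L bs)
  | _, _ => .tru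

theorem cubeForm_eval (v : Nat → Bool) : ∀ (L : List Nat) (bs : List Bool),
    (cubeForm L bs).eval v = true ↔ ∀ p ∈ L.zip bs, v p.1 = p.2
  | [], bs => by simp [cubeForm, PropForm.eval]
  | n :: L, [] => by simp [cubeForm, PropForm.eval]
  | n :: L, b :: bs => by
      cases b <;> simp [cubeForm, PropForm.eval, cubeForm_eval v L bs]

theorem cubeForm_vars : ∀ (L : List Nat) (bs : List Bool), (cubeForm L bs).vars ⊆ L.toFinset
  | [], bs => by simp [cubeForm, PropForm.vars]
  | n :: L, [] => by simp [cubeForm, PropForm.vars]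
  | n :: L, b :: bs => by
      intro x hx
      cases b <;> simp only [cubeForm, PropForm.vars, if_true, if_false, Bool.false_eq_true,
        Finset.mem_union, Finset.mem_singleton] at hx <;>
      · rcases hx with rfl | hx
        · simp
        · simp only [List.toFinset_cons, Finset.mem_insert]
          exact Or.inr (cubeForm_vars L bs hx)

def allBools : Nat → List (List Bool)
  | 0 => [[]]
  | n + 1 => (allBools n).flatMap (fun bs => [true :: bs, false :: bs])

theorem mem_allBools : ∀ (n : Nat) (bs : List Bool), bs ∈ allBools n ↔ bs.length = n
  | 0, bs => by simp [allBools, List.length_eq_zero_iff]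
  | n + 1, bs => by
      simp only [allBools, List.mem_flatMap, List.mem_cons, List.mem_singleton,
        List.not_mem_nil, or_false]
      constructor
      · rintro ⟨cs, hcs, h⟩
        rcases h with rfl | rfl <;> simp [(mem_allBools n cs).mp hcs]
      · intro h
        cases bs with
        | nil => simp at h
        | cons b cs =>
          refine ⟨cs, (mem_allBools n cs).mpr (by simpa using h), ?_⟩
          cases b <;> simp

theorem zip_map_self (f : Nat → Bool) : ∀ (L : List Nat), ∀ p ∈ L.zip (L.map f), p.2 = f p.1
  | [], p => by simp
  | n :: L, p => by
      intro hp
      simp only [List.map_cons, List.zip_cons_cons, List.mem_cons] at hp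
      rcases hp with rfl | hp
      · rfl
      · exact zip_map_self f L p hp

theorem mem_zip_of_mem_left : ∀ (L : List Nat) (bs : List Bool), L.length = bs.length →
    ∀ n ∈ L, ∃ b, (n, b) ∈ L.zip bs
  | [], _, _ => by simp
  | n :: L, [], h => by simp at h
  | n :: L, b :: bs, h => by
      intro m hm
      rcases List.mem_cons.mp hm with rfl | hm
      · exact ⟨b, by simp⟩
      · obtain ⟨c, hc⟩ := mem_zip_of_mem_left L bs (by simpa using h) m hm
        exact ⟨c, by simp [hc]⟩

theorem lit_eval_congr (u w : Nat → Bool) (l : Lit) (h : u l.var = w l.var) :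
    l.eval u = l.eval w := by
  cases l <;> simp only [Lit.eval, Lit.var] at h ⊢ <;> rw [h]

theorem stmt9 (X Y : Finset (Finset Lit))
    (hvalid : ∀ v : Nat → Bool, (∀ C ∈ X, clauseSat v C) → ∃ D ∈ Y, cubeSat v D) :
    ∃ I : PropForm,
      (∀ v : Nat → Bool, (∀ C ∈ X, clauseSat v C) → I.eval v = true) ∧
      (∀ v : Nat → Bool, I.eval v = true → ∃ D ∈ Y, cubeSat v D) ∧
      ((∃ l : Lit, ∃ C₁ ∈ X ∪ Y.image (fun D => D.image Lit.compl),
          ∃ C₂ ∈ X ∪ Y.image (fun D => D.image Lit.compl),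
            C₁ ≠ C₂ ∧ l ∈ C₁ ∧ l.compl ∈ C₂) →
        ∀ n ∈ I.vars, (∃ C ∈ X, ∃ l ∈ C, Lit.var l = n) ∧
          (∃ D ∈ Y, ∃ l ∈ D, Lit.var l = n)) := by
  classical
  set VX := X.sup (fun C => C.image Lit.var) with hVX
  set VY := Y.sup (fun D => D.image Lit.var) with hVY
  set L := (VX ∩ VY).toList with hL
  set P : List Bool → Prop := fun bs => ∃ w : Nat → Bool,
    (∀ p ∈ L.zip bs, w p.1 = p.2) ∧ ∀ C ∈ X, clauseSat w C with hP
  refine ⟨bigDisj (((allBools L.length).filter (fun bs => P bs)).map (cubeForm L)), ?_, ?_, ?_⟩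
  · intro v hv
    rw [bigDisj_eval]
    refine ⟨cubeForm L (L.map v), ?_, ?_⟩
    · simp only [List.mem_map, List.mem_filter]
      refine ⟨L.map v, ⟨(mem_allBools _ _).mpr (by simp), ?_⟩, rfl⟩
      simp only [decide_eq_true_eq, hP]
      exact ⟨v, fun p hp => (zip_map_self v L p hp).symm, hv⟩
    · rw [cubeForm_eval]
      intro p hp
      exact (zip_map_self v L p hp).symm
  · intro v hI
    rw [bigDisj_eval] at hI
    obtain ⟨A, hA, hAv⟩ := hI
    simp only [List.mem_map, List.mem_filter, decide_eq_true_eq] at hA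
    obtain ⟨bs, ⟨hbs_len, hbsP⟩, rfl⟩ := hA
    rw [mem_allBools] at hbs_len
    obtain ⟨w, hw, hwX⟩ := hbsP
    rw [cubeForm_eval] at hAv
    have hagree : ∀ n ∈ VX ∩ VY, w n = v n := by
      intro n hn
      have hnL : n ∈ L := Finset.mem_toList.mpr hn
      obtain ⟨b, hb⟩ := mem_zip_of_mem_left L bs hbs_len.symm n hnL
      rw [hw _ hb, hAv _ hb]
    set u : Nat → Bool := fun n => if n ∈ VY then v n else w n with hu
    have hXu : ∀ C ∈ X, clauseSat u C := by
      intro C hC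
      obtain ⟨l, hl, hle⟩ := hwX C hC
      refine ⟨l, hl, ?_⟩
      have huw : u l.var = w l.var := by
        by_cases h : l.var ∈ VY
        · have hx : l.var ∈ VX := Finset.mem_sup.mpr ⟨C, hC, Finset.mem_image.mpr ⟨l, hl, rfl⟩⟩
          simp only [hu, h, if_true]
          exact (hagree _ (Finset.mem_inter.mpr ⟨hx, h⟩)).symm
        · simp only [hu, h, if_false]
      rw [lit_eval_congr u w l huw]
      exact hle
    obtain ⟨D, hD, hDu⟩ := hvalid u hXu
    refine ⟨D, hD, fun l hl => ?_⟩
    have hy : l.var ∈ VY := Finset.mem_sup.mpr ⟨D, hD, Finset.mem_image.mpr ⟨l, hl, rfl⟩⟩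
    have hvu : v l.var = u l.var := by simp only [hu, hy, if_true]
    rw [lit_eval_congr v u l hvu]
    exact hDu l hl
  · intro _ n hn
    obtain ⟨A, hA, hnA⟩ := bigDisj_vars _ n hn
    simp only [List.mem_map] at hA
    obtain ⟨bs, _, rfl⟩ := hA
    have hmem := cubeForm_vars L bs hnA
    rw [List.mem_toFinset] at hmem
    rw [hL, Finset.mem_toList, Finset.mem_inter] at hmem
    obtain ⟨hx, hy⟩ := hmem
    rw [hVX, Finset.mem_sup] at hx
    rw [hVY, Finset.mem_sup] at hy
    obtain ⟨C, hC, hC2⟩ := hx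
    obtain ⟨l, hl, rfl⟩ := Finset.mem_image.mp hC2
    obtain ⟨D, hD, hD2⟩ := hy
    obtain ⟨l2, hl2, hl22⟩ := Finset.mem_image.mp hD2
    exact ⟨⟨C, hC, l, hl, rfl⟩, ⟨D, hD, l2, hl2, hl22⟩⟩
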